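/- Let G be a grid graph on n vertices (vertex set V ⊆ ℤ², edges between vertices at Euclidean distance 1). G admits a partition of its vertex set into induced paths on three vertices if and only if the point set V can be identified by 2n/3 disks of radius 1/2. -/

import Mathlib

noncomputable section

/-- The Euclidean plane. -/
abbrev Pt : Type := EuclideanSpace ℝ (Fin 2)

instance : DecidableEq Pt := Classical.decEq _

/-- A disk: a closed Euclidean ball with nonnegative radius. -/
def IsDisk (D : Set Pt) : Prop :=
  ∃ (c : Pt) (r : ℝ), 0 ≤ r ∧ D = Metric.closedBall c r

/-- A family of disks identifies a finite point set: every point is covered and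
every pair of distinct points is separated by some disk. -/
def Identifies (𝒟 : Finset (Set Pt)) (P : Finset Pt) : Prop :=
  (∀ p ∈ P, ∃ D ∈ 𝒟, p ∈ D) ∧
  (∀ p ∈ P, ∀ q ∈ P, p ≠ q → ∃ D ∈ 𝒟, (p ∈ D ∧ q ∉ D) ∨ (q ∈ D ∧ p ∉ D))

/-- Minimum number of disks needed to identify `P`. -/
def gammaID (P : Finset Pt) : ℕ :=
  sInf {k | ∃ 𝒟 : Finset (Set Pt), 𝒟.card = k ∧ (∀ D ∈ 𝒟, IsDisk D) ∧ Identifies 𝒟 P}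

/-- Adjacency in a grid graph: integer points at Euclidean distance 1. -/
def GridAdj (a b : ℤ × ℤ) : Prop := (a.1 - b.1) ^ 2 + (a.2 - b.2) ^ 2 = 1

/-- Embedding of integer points into the plane. -/
def embZ (a : ℤ × ℤ) : Pt := WithLp.toLp 2 ![(a.1 : ℝ), (a.2 : ℝ)]

section P3aux
open Metric Finset

lemma dist_embZ_sq (a b : ℤ × ℤ) :
    dist (embZ a) (embZ b) ^ 2 = ((a.1 - b.1 : ℤ)^2 + (a.2 - b.2 : ℤ)^2 : ℝ) := by
  rw [EuclideanSpace.dist_eq, Real.sq_sqrt (by positivity)]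
  simp [embZ, Fin.sum_univ_two, Real.dist_eq, sq_abs]

lemma embZ_inj : Function.Injective embZ := by
  intro a b h
  have h2 : dist (embZ a) (embZ b) ^ 2 = 0 := by rw [h]; simp
  rw [dist_embZ_sq] at h2
  have : (a.1 - b.1 : ℤ)^2 + (a.2 - b.2 : ℤ)^2 = 0 := by exact_mod_cast h2
  have h1 := sq_nonneg (a.1 - b.1); have h3 := sq_nonneg (a.2 - b.2)
  have e1 : a.1 = b.1 := by nlinarith
  have e2 : a.2 = b.2 := by nlinarith
  exact Prod.ext e1 e2

lemma gridAdj_of_ball {c : Pt} {a b : ℤ × ℤ} (ha : embZ a ∈ closedBall c (1/2))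
    (hb : embZ b ∈ closedBall c (1/2)) (hab : a ≠ b) : GridAdj a b := by
  have hd : dist (embZ a) (embZ b) ≤ 1 := by
    calc dist (embZ a) (embZ b) ≤ dist (embZ a) c + dist c (embZ b) := dist_triangle _ _ _
    _ ≤ 1/2 + 1/2 := by
        refine add_le_add (mem_closedBall.mp ha) ?_
        rw [dist_comm]; exact mem_closedBall.mp hb
    _ = 1 := by norm_num
  have hd2 : dist (embZ a) (embZ b) ^ 2 ≤ 1 := by nlinarith [dist_nonneg (x := embZ a) (y := embZ b)]
  rw [dist_embZ_sq] at hd2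
  have hle : (a.1 - b.1)^2 + (a.2 - b.2)^2 ≤ 1 := by exact_mod_cast hd2
  have hne : (a.1 - b.1)^2 + (a.2 - b.2)^2 ≠ 0 := by
    intro h0
    apply hab
    have h1 := sq_nonneg (a.1 - b.1); have h3 := sq_nonneg (a.2 - b.2)
    exact Prod.ext (by nlinarith) (by nlinarith)
  have h1 := sq_nonneg (a.1 - b.1); have h3 := sq_nonneg (a.2 - b.2)
  unfold GridAdj; omega

lemma not_adj_of_path {a b c : ℤ × ℤ} (hab : GridAdj a b) (hbc : GridAdj b c)
    (hac : a ≠ c) : ¬ GridAdj a c := by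
  intro h
  unfold GridAdj at *
  have key : (a.1 - c.1)^2 + (a.2 - c.2)^2
      = ((a.1-b.1)^2+(a.2-b.2)^2) + ((b.1-c.1)^2+(b.2-c.2)^2)
        + 2*((a.1-b.1)*(b.1-c.1) + (a.2-b.2)*(b.2-c.2)) := by ring
  rw [h, hab, hbc] at key
  omega

lemma dist_embZ_of_adj {a b : ℤ × ℤ} (h : GridAdj a b) : dist (embZ a) (embZ b) = 1 := by
  have h2 : dist (embZ a) (embZ b) ^ 2 = 1 := by
    rw [dist_embZ_sq]; exact_mod_cast h
  nlinarith [dist_nonneg (x := embZ a) (y := embZ b)]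

lemma mem_mid_ball_iff {a b p : ℤ × ℤ} (h : GridAdj a b) :
    embZ p ∈ closedBall (midpoint ℝ (embZ a) (embZ b)) (1/2) ↔ p = a ∨ p = b := by
  have hane : a ≠ b := by
    intro e; subst e; simp [GridAdj] at h
  have hma : embZ a ∈ closedBall (midpoint ℝ (embZ a) (embZ b)) (1/2) := by
    rw [mem_closedBall, dist_left_midpoint, dist_embZ_of_adj h]; norm_num
  have hmb : embZ b ∈ closedBall (midpoint ℝ (embZ a) (embZ b)) (1/2) := by
    rw [mem_closedBall, dist_right_midpoint, dist_embZ_of_adj h]; norm_num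
  constructor
  · intro hp
    by_contra hcon
    push_neg at hcon
    obtain ⟨hpa, hpb⟩ := hcon
    have h1 : GridAdj p a := gridAdj_of_ball hp hma hpa
    have h2 : GridAdj a b := h
    exact not_adj_of_path h1 h2 hpb (gridAdj_of_ball hp hmb hpb)
  · rintro (rfl | rfl) <;> assumption

lemma gridAdj_ne {a b : ℤ × ℤ} (h : GridAdj a b) : a ≠ b := by
  intro e; subst e; simp [GridAdj] at h

theorem P3aux_fwd (V : Finset (ℤ × ℤ))
    (hT : ∃ T : Finset ((ℤ × ℤ) × (ℤ × ℤ) × (ℤ × ℤ)),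
      (∀ t ∈ T, t.1 ∈ V ∧ t.2.1 ∈ V ∧ t.2.2 ∈ V ∧
        GridAdj t.1 t.2.1 ∧ GridAdj t.2.1 t.2.2 ∧ ¬ GridAdj t.1 t.2.2 ∧ t.1 ≠ t.2.2) ∧
      (∀ v ∈ V, ∃! t, t ∈ T ∧ (v = t.1 ∨ v = t.2.1 ∨ v = t.2.2))) :
    (∃ 𝒟 : Finset (Set Pt),
      (∀ D ∈ 𝒟, ∃ c : Pt, D = Metric.closedBall c (1 / 2)) ∧
      Identifies 𝒟 (V.image embZ) ∧ 3 * 𝒟.card ≤ 2 * V.card) := by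
  classical
  obtain ⟨T, hT1, hT2⟩ := hT
  set d1 : (ℤ × ℤ) × (ℤ × ℤ) × (ℤ × ℤ) → Set Pt :=
    fun t => closedBall (midpoint ℝ (embZ t.1) (embZ t.2.1)) (1/2) with hd1
  set d2 : (ℤ × ℤ) × (ℤ × ℤ) × (ℤ × ℤ) → Set Pt :=
    fun t => closedBall (midpoint ℝ (embZ t.2.1) (embZ t.2.2)) (1/2) with hd2
  refine ⟨T.image d1 ∪ T.image d2, ?_, ⟨?_, ?_⟩, ?_⟩
  · intro D hD
    rcases Finset.mem_union.mp hD with h | h <;>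
      · obtain ⟨t, _, rfl⟩ := Finset.mem_image.mp h
        exact ⟨_, rfl⟩
  · -- coverage
    intro p hp
    obtain ⟨v, hv, rfl⟩ := Finset.mem_image.mp hp
    obtain ⟨t, ⟨htT, hvt⟩, _⟩ := hT2 v hv
    obtain ⟨_, _, _, hadj1, hadj2, _, _⟩ := hT1 t htT
    rcases hvt with rfl | rfl | rfl
    · exact ⟨d1 t, Finset.mem_union_left _ (Finset.mem_image_of_mem _ htT),
        (mem_mid_ball_iff hadj1).mpr (Or.inl rfl)⟩
    · exact ⟨d1 t, Finset.mem_union_left _ (Finset.mem_image_of_mem _ htT),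
        (mem_mid_ball_iff hadj1).mpr (Or.inr rfl)⟩
    · exact ⟨d2 t, Finset.mem_union_right _ (Finset.mem_image_of_mem _ htT),
        (mem_mid_ball_iff hadj2).mpr (Or.inr rfl)⟩
  · -- separation
    intro p hp q hq hpq
    obtain ⟨u, hu, rfl⟩ := Finset.mem_image.mp hp
    obtain ⟨v, hv, rfl⟩ := Finset.mem_image.mp hq
    have huv : u ≠ v := fun e => hpq (by rw [e])
    obtain ⟨t, ⟨htT, hut⟩, _⟩ := hT2 u hu
    obtain ⟨_, _, _, hadj1, hadj2, _, h13⟩ := hT1 t htT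
    have h12 := gridAdj_ne hadj1
    have h23 := gridAdj_ne hadj2
    -- the two disks of t
    have m1 : ∀ w : ℤ × ℤ, embZ w ∈ d1 t ↔ w = t.1 ∨ w = t.2.1 := fun w => mem_mid_ball_iff hadj1
    have m2 : ∀ w : ℤ × ℤ, embZ w ∈ d2 t ↔ w = t.2.1 ∨ w = t.2.2 := fun w => mem_mid_ball_iff hadj2
    have hD1 : d1 t ∈ T.image d1 ∪ T.image d2 :=
      Finset.mem_union_left _ (Finset.mem_image_of_mem _ htT)
    have hD2 : d2 t ∈ T.image d1 ∪ T.image d2 :=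
      Finset.mem_union_right _ (Finset.mem_image_of_mem _ htT)
    rcases hut with rfl | rfl | rfl
    · -- u = t.1 : use d1; if v also in d1 then v = t.2.1, use d2
      by_cases hv1 : embZ v ∈ d1 t
      · rcases (m1 v).mp hv1 with rfl | rfl
        · exact absurd rfl huv
        · exact ⟨d2 t, hD2, Or.inr ⟨(m2 _).mpr (Or.inl rfl),
            fun hc => by rcases (m2 _).mp hc with h | h; exacts [h12 h, h13 h]⟩⟩
      · exact ⟨d1 t, hD1, Or.inl ⟨(m1 _).mpr (Or.inl rfl), hv1⟩⟩
    · by_cases hv1 : embZ v ∈ d2 t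
      · rcases (m2 v).mp hv1 with rfl | rfl
        · exact absurd rfl huv
        · exact ⟨d1 t, hD1, Or.inl ⟨(m1 _).mpr (Or.inr rfl),
            fun hc => by rcases (m1 _).mp hc with h | h; exacts [h13 h.symm, h23 h.symm]⟩⟩
      · exact ⟨d2 t, hD2, Or.inl ⟨(m2 _).mpr (Or.inl rfl), hv1⟩⟩
    · by_cases hv1 : embZ v ∈ d2 t
      · rcases (m2 v).mp hv1 with rfl | rfl
        · exact ⟨d1 t, hD1, Or.inr ⟨(m1 _).mpr (Or.inr rfl),
            fun hc => by rcases (m1 _).mp hc with h | h; exacts [h13 h.symm, h23 h.symm]⟩⟩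
        · exact absurd rfl huv
      · exact ⟨d2 t, hD2, Or.inl ⟨(m2 _).mpr (Or.inr rfl), hv1⟩⟩
  · -- cardinality
    have hVcard : V.card = 3 * T.card := by
      have hV : V = T.biUnion (fun t => {t.1, t.2.1, t.2.2}) := by
        apply Finset.ext
        intro v
        simp only [Finset.mem_biUnion, Finset.mem_insert, Finset.mem_singleton]
        constructor
        · intro hv
          obtain ⟨t, ⟨htT, hvt⟩, _⟩ := hT2 v hv
          exact ⟨t, htT, hvt⟩
        · rintro ⟨t, htT, hvt⟩
          obtain ⟨h1, h2, h3, _⟩ := hT1 t htT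
          rcases hvt with rfl | rfl | rfl <;> assumption
      have hdisj : ∀ t ∈ T, ∀ t' ∈ T, t ≠ t' →
          Disjoint ({t.1, t.2.1, t.2.2} : Finset (ℤ × ℤ)) {t'.1, t'.2.1, t'.2.2} := by
        intro t ht t' ht' htt'
        rw [Finset.disjoint_left]
        intro v hv hv'
        simp only [Finset.mem_insert, Finset.mem_singleton] at hv hv'
        have hvV : v ∈ V := by
          obtain ⟨h1, h2, h3, _⟩ := hT1 t ht
          rcases hv with rfl | rfl | rfl <;> assumption
        obtain ⟨t0, _, huniq⟩ := hT2 v hvV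
        exact htt' ((huniq t ⟨ht, hv⟩).trans (huniq t' ⟨ht', hv'⟩).symm)
      rw [hV, Finset.card_biUnion hdisj]
      rw [Finset.sum_congr rfl (fun t htT => ?_), Finset.sum_const, smul_eq_mul, mul_comm]
      obtain ⟨_, _, _, hadj1, hadj2, _, h13⟩ := hT1 t htT
      have h12 := gridAdj_ne hadj1
      have h23 := gridAdj_ne hadj2
      rw [Finset.card_insert_of_notMem (by simp [h12, h13]),
        Finset.card_insert_of_notMem (by simp [h23]), Finset.card_singleton]
    have hcard : (T.image d1 ∪ T.image d2).card ≤ 2 * T.card := by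
      calc (T.image d1 ∪ T.image d2).card ≤ (T.image d1).card + (T.image d2).card :=
            Finset.card_union_le _ _
        _ ≤ T.card + T.card := add_le_add (Finset.card_image_le) (Finset.card_image_le)
        _ = 2 * T.card := by ring
    rw [hVcard]
    omega

lemma gridAdj_symm {a b : ℤ × ℤ} (h : GridAdj a b) : GridAdj b a := by
  unfold GridAdj at *; linear_combination h

theorem P3aux_bwd (V : Finset (ℤ × ℤ))
    (h : ∃ 𝒟 : Finset (Set Pt),
      (∀ D ∈ 𝒟, ∃ c : Pt, D = Metric.closedBall c (1 / 2)) ∧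
      Identifies 𝒟 (V.image embZ) ∧ 3 * 𝒟.card ≤ 2 * V.card) :
    (∃ T : Finset ((ℤ × ℤ) × (ℤ × ℤ) × (ℤ × ℤ)),
      (∀ t ∈ T, t.1 ∈ V ∧ t.2.1 ∈ V ∧ t.2.2 ∈ V ∧
        GridAdj t.1 t.2.1 ∧ GridAdj t.2.1 t.2.2 ∧ ¬ GridAdj t.1 t.2.2 ∧ t.1 ≠ t.2.2) ∧
      (∀ v ∈ V, ∃! t, t ∈ T ∧ (v = t.1 ∨ v = t.2.1 ∨ v = t.2.2))) := by
  classical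
  obtain ⟨𝒟, hball, ⟨hcov, hsep⟩, hcard⟩ := h
  set P : Finset Pt := V.image embZ with hP
  set s : Pt → Finset (Set Pt) := fun p => 𝒟.filter (p ∈ ·) with hs
  have hPcard : P.card = V.card := Finset.card_image_of_injective V embZ_inj
  -- signatures are injective on P
  have sinj : ∀ p ∈ P, ∀ q ∈ P, s p = s q → p = q := by
    intro p hp q hq hsq
    by_contra hne
    obtain ⟨D, hD, hor⟩ := hsep p hp q hq hne
    rcases hor with ⟨h1, h2⟩ | ⟨h1, h2⟩
    · apply h2
      have hDp : D ∈ s p := mem_filter.mpr ⟨hD, h1⟩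
      rw [hsq] at hDp
      exact (mem_filter.mp hDp).2
    · apply h2
      have hDq : D ∈ s q := mem_filter.mpr ⟨hD, h1⟩
      rw [← hsq] at hDq
      exact (mem_filter.mp hDq).2
  -- each point is covered : s p nonempty
  have scov : ∀ p ∈ P, 1 ≤ (s p).card := by
    intro p hp
    obtain ⟨D, hD, hpD⟩ := hcov p hp
    exact Finset.card_pos.mpr ⟨D, mem_filter.mpr ⟨hD, hpD⟩⟩
  -- each disk covers at most two points
  have hdisk2 : ∀ D ∈ 𝒟, (P.filter (· ∈ D)).card ≤ 2 := by
    intro D hD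
    by_contra hgt
    push_neg at hgt
    obtain ⟨p, hp, q, hq, r, hr, hpq, hpr, hqr⟩ := Finset.two_lt_card.mp hgt
    obtain ⟨hpP, hpD⟩ := mem_filter.mp hp
    obtain ⟨hqP, hqD⟩ := mem_filter.mp hq
    obtain ⟨hrP, hrD⟩ := mem_filter.mp hr
    obtain ⟨a, _, rfl⟩ := Finset.mem_image.mp hpP
    obtain ⟨b, _, rfl⟩ := Finset.mem_image.mp hqP
    obtain ⟨c, _, rfl⟩ := Finset.mem_image.mp hrP
    obtain ⟨ctr, hDeq⟩ := hball D hD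
    rw [hDeq] at hpD hqD hrD
    have hab : a ≠ b := fun e => hpq (by rw [e])
    have hbc : b ≠ c := fun e => hqr (by rw [e])
    have hac : a ≠ c := fun e => hpr (by rw [e])
    exact not_adj_of_path (gridAdj_of_ball hpD hqD hab) (gridAdj_of_ball hqD hrD hbc) hac
      (gridAdj_of_ball hpD hrD hac)
  -- double counting
  have hdc : ∑ p ∈ P, (s p).card = ∑ D ∈ 𝒟, (P.filter (· ∈ D)).card := by
    simp only [hs, Finset.card_filter]
    exact Finset.sum_comm
  -- the lonely set
  set Lon : Finset Pt := P.filter (fun p => (s p).card = 1) with hLon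
  set f : Pt → Set Pt := fun p =>
    if h : (s p).card = 1 then (Finset.card_eq_one.mp h).choose else ∅ with hf
  have hfspec : ∀ p ∈ Lon, s p = {f p} := by
    intro p hp
    have h1 : (s p).card = 1 := (mem_filter.mp hp).2
    simp only [hf, dif_pos h1]
    exact (Finset.card_eq_one.mp h1).choose_spec
  have hfD : ∀ p ∈ Lon, f p ∈ 𝒟 := by
    intro p hp
    have : f p ∈ s p := by rw [hfspec p hp]; exact mem_singleton_self _
    exact (mem_filter.mp this).1
  have hfmem : ∀ p ∈ Lon, p ∈ f p := by
    intro p hp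
    have : f p ∈ s p := by rw [hfspec p hp]; exact mem_singleton_self _
    exact (mem_filter.mp this).2
  have hfinj : ∀ p ∈ Lon, ∀ q ∈ Lon, f p = f q → p = q := by
    intro p hp q hq hfq
    exact sinj p (mem_filter.mp hp).1 q (mem_filter.mp hq).1
      (by rw [hfspec p hp, hfspec q hq, hfq])
  have hLk : Lon.card ≤ 𝒟.card :=
    Finset.card_le_card_of_injOn f hfD hfinj
  -- lower bound on the sum
  have hlow : ∀ p ∈ P, (if (s p).card = 1 then 1 else 2) ≤ (s p).card := by
    intro p hp
    split
    · omega
    · have := scov p hp; omega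
  have hsum_ge : ∑ p ∈ P, (if (s p).card = 1 then 1 else 2) ≤ ∑ p ∈ P, (s p).card :=
    Finset.sum_le_sum hlow
  have hsplit : ∑ p ∈ P, (if (s p).card = 1 then 1 else 2)
      = Lon.card + 2 * (P.card - Lon.card) := by
    rw [Finset.sum_ite, Finset.sum_const, Finset.sum_const]
    have : (P.filter (fun p => ¬ (s p).card = 1)).card = P.card - Lon.card := by
      have := Finset.card_filter_add_card_filter_not
        (s := P) (p := fun p => (s p).card = 1)
      have hL : Lon.card = (P.filter (fun p => (s p).card = 1)).card := rfl
      omega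
    rw [this]
    simp [mul_comm, hLon]
  have hLP : Lon.card ≤ P.card := Finset.card_filter_le _ _
  have hsum_le : ∑ p ∈ P, (s p).card ≤ 2 * 𝒟.card := by
    rw [hdc]
    calc ∑ D ∈ 𝒟, (P.filter (· ∈ D)).card ≤ ∑ D ∈ 𝒟, 2 := Finset.sum_le_sum hdisk2
      _ = 2 * 𝒟.card := by rw [Finset.sum_const]; ring
  -- tightness
  have hk : 3 * 𝒟.card = 2 * P.card := by omega
  have hLonk : Lon.card = 𝒟.card := by omega
  have hsum_eq : ∑ p ∈ P, (s p).card = 2 * 𝒟.card := by omega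
  -- every point has signature of size exactly 1 or 2
  have hsig12 : ∀ p ∈ P, (s p).card = (if (s p).card = 1 then 1 else 2) := by
    have h3 := (Finset.sum_eq_sum_iff_of_le hlow).mp (by omega)
    intro p hp
    have := h3 p hp
    omega
  -- every disk covers exactly two points
  have hdisk_eq : ∀ D ∈ 𝒟, (P.filter (· ∈ D)).card = 2 := by
    have h2 : ∑ D ∈ 𝒟, (P.filter (· ∈ D)).card = ∑ D ∈ 𝒟, 2 := by
      rw [← hdc, hsum_eq, Finset.sum_const]; ring
    have h3 := (Finset.sum_eq_sum_iff_of_le hdisk2).mp h2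
    intro D hD
    have := h3 D hD
    omega
  -- every disk contains a lonely point
  have hsurj : ∀ D ∈ 𝒟, ∃ p ∈ Lon, f p = D := by
    have himg : Lon.image f = 𝒟 := by
      apply Finset.eq_of_subset_of_card_le
      · intro D hD
        obtain ⟨p, hp, rfl⟩ := Finset.mem_image.mp hD
        exact hfD p hp
      · rw [Finset.card_image_of_injOn hfinj]; omega
    intro D hD
    rw [← himg] at hD
    exact Finset.mem_image.mp hD
  -- membership in P
  have hmemP : ∀ a ∈ V, embZ a ∈ P := fun a ha => Finset.mem_image_of_mem _ ha
  -- structure of a disk: one lonely and one non-lonely point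
  have hdiskpts : ∀ D ∈ 𝒟, ∃ a b : ℤ × ℤ, a ∈ V ∧ b ∈ V ∧ a ≠ b ∧
      (s (embZ a)).card = 1 ∧ ¬ (s (embZ b)).card = 1 ∧
      (∀ x ∈ P, (x ∈ D ↔ x = embZ a ∨ x = embZ b)) := by
    intro D hD
    obtain ⟨p, q, hpq, hfilt⟩ := Finset.card_eq_two.mp (hdisk_eq D hD)
    have hmem : ∀ x, x ∈ P ∧ x ∈ D ↔ x = p ∨ x = q := by
      intro x
      rw [← Finset.mem_filter (s := P), hfilt]
      simp
    have hpPD : p ∈ P ∧ p ∈ D := (hmem p).mpr (Or.inl rfl)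
    have hqPD : q ∈ P ∧ q ∈ D := (hmem q).mpr (Or.inr rfl)
    -- the lonely point of D
    obtain ⟨l, hlLon, hlf⟩ := hsurj D hD
    have hlP : l ∈ P := (mem_filter.mp hlLon).1
    have hl1 : (s l).card = 1 := (mem_filter.mp hlLon).2
    have hlD : l ∈ D := hlf ▸ hfmem l hlLon
    have hlpq : l = p ∨ l = q := (hmem l).mp ⟨hlP, hlD⟩
    -- a point of D other than the lonely one is not lonely
    have hnotboth : ∀ x, x ∈ P → x ∈ D → (s x).card = 1 → x = l := by
      intro x hxP hxD hx1
      apply sinj x hxP l hlP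
      obtain ⟨E, hE⟩ := Finset.card_eq_one.mp hx1
      obtain ⟨F, hF⟩ := Finset.card_eq_one.mp hl1
      have hDx : D ∈ s x := mem_filter.mpr ⟨hD, hxD⟩
      have hDl : D ∈ s l := mem_filter.mpr ⟨hD, hlD⟩
      rw [hE] at hDx ⊢
      rw [hF] at hDl ⊢
      rw [Finset.mem_singleton] at hDx hDl
      rw [← hDx, ← hDl]
    obtain ⟨a, haV, hap⟩ := Finset.mem_image.mp hpPD.1
    obtain ⟨b, hbV, hbq⟩ := Finset.mem_image.mp hqPD.1
    rcases hlpq with rfl | rfl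
    · refine ⟨a, b, haV, hbV, ?_, ?_, ?_, ?_⟩
      · intro e; rw [e, hbq] at hap; exact hpq hap.symm
      · rw [hap]; exact hl1
      · intro h1
        rw [hbq] at h1
        exact hpq ((hnotboth q hqPD.1 hqPD.2 h1).symm)
      · intro x hxP
        rw [hap, hbq]
        constructor
        · intro hxD; exact (hmem x).mp ⟨hxP, hxD⟩
        · rintro (rfl | rfl); exacts [hpPD.2, hqPD.2]
    · refine ⟨b, a, hbV, haV, ?_, ?_, ?_, ?_⟩
      · intro e; rw [e, hap] at hbq; exact hpq hbq
      · rw [hbq]; exact hl1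
      · intro h1
        rw [hap] at h1
        exact hpq (hnotboth p hpPD.1 hpPD.2 h1)
      · intro x hxP
        rw [hap, hbq]
        constructor
        · intro hxD
          rcases (hmem x).mp ⟨hxP, hxD⟩ with h | h
          exacts [Or.inr h, Or.inl h]
        · rintro (rfl | rfl); exacts [hqPD.2, hpPD.2]
  -- sharing a disk
  set shares : ℤ × ℤ → ℤ × ℤ → Prop :=
    fun a b => ∃ D ∈ 𝒟, embZ a ∈ D ∧ embZ b ∈ D with hshares
  have shares_adj : ∀ a b : ℤ × ℤ, a ≠ b → shares a b → GridAdj a b := by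
    rintro a b hab ⟨D, hD, haD, hbD⟩
    obtain ⟨c, rfl⟩ := hball D hD
    exact gridAdj_of_ball haD hbD hab
  -- the unique non-lonely point of a disk
  have nonlonely_unique : ∀ D ∈ 𝒟, ∀ x y : ℤ × ℤ, x ∈ V → y ∈ V →
      embZ x ∈ D → embZ y ∈ D → ¬ (s (embZ x)).card = 1 → ¬ (s (embZ y)).card = 1 →
      x = y := by
    intro D hD x y hxV hyV hxD hyD hx hy
    obtain ⟨a, b, haV, hbV, hab, ha1, hb1, hiff⟩ := hdiskpts D hD
    have hx' := (hiff _ (hmemP x hxV)).mp hxD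
    have hy' := (hiff _ (hmemP y hyV)).mp hyD
    rcases hx' with h | h
    · exact absurd (h ▸ ha1) hx
    · rcases hy' with h' | h'
      · exact absurd (h' ▸ ha1) hy
      · exact embZ_inj (h.trans h'.symm)
  -- signature of a lonely point is exactly its disk
  have lonspec : ∀ p ∈ P, (s p).card = 1 → ∀ D ∈ 𝒟, p ∈ D → s p = {D} := by
    intro p hp h1 D hD hpD
    obtain ⟨E, hE⟩ := Finset.card_eq_one.mp h1
    have : D ∈ s p := mem_filter.mpr ⟨hD, hpD⟩
    rw [hE, Finset.mem_singleton] at this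
    rw [hE, this]
  -- partners of a middle point
  have hmidpartners : ∀ b ∈ V, (s (embZ b)).card = 2 →
      ∃ a c : ℤ × ℤ, a ∈ V ∧ c ∈ V ∧ a ≠ c ∧
        (s (embZ a)).card = 1 ∧ (s (embZ c)).card = 1 ∧
        shares a b ∧ shares c b ∧
        (∀ x ∈ V, (s (embZ x)).card = 1 → shares x b → x = a ∨ x = c) := by
    intro b hbV hb2
    obtain ⟨D1, D2, hD12, hsb⟩ := Finset.card_eq_two.mp hb2
    have hD1s : D1 ∈ s (embZ b) := by rw [hsb]; simp
    have hD2s : D2 ∈ s (embZ b) := by rw [hsb]; simp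
    have hD1 : D1 ∈ 𝒟 := (mem_filter.mp hD1s).1
    have hD2 : D2 ∈ 𝒟 := (mem_filter.mp hD2s).1
    have hbD1 : embZ b ∈ D1 := (mem_filter.mp hD1s).2
    have hbD2 : embZ b ∈ D2 := (mem_filter.mp hD2s).2
    obtain ⟨a1, b1, ha1V, hb1V, hab1, ha11, hb11, hiff1⟩ := hdiskpts D1 hD1
    obtain ⟨a2, b2, ha2V, hb2V, hab2, ha21, hb21, hiff2⟩ := hdiskpts D2 hD2
    have ha1D1 : embZ a1 ∈ D1 := (hiff1 _ (hmemP a1 ha1V)).mpr (Or.inl rfl)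
    have ha2D2 : embZ a2 ∈ D2 := (hiff2 _ (hmemP a2 ha2V)).mpr (Or.inl rfl)
    have hb1lon : (s (embZ a1)).card = 1 := ha11
    have hsa1 : s (embZ a1) = {D1} := lonspec _ (hmemP a1 ha1V) ha11 D1 hD1 ha1D1
    have hsa2 : s (embZ a2) = {D2} := lonspec _ (hmemP a2 ha2V) ha21 D2 hD2 ha2D2
    have ha1a2 : a1 ≠ a2 := by
      intro e
      apply hD12
      have := hsa1.symm.trans (by rw [e, hsa2])
      exact Finset.singleton_injective this
    refine ⟨a1, a2, ha1V, ha2V, ha1a2, ha11, ha21,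
      ⟨D1, hD1, ha1D1, hbD1⟩, ⟨D2, hD2, ha2D2, hbD2⟩, ?_⟩
    rintro x hxV hx1 ⟨D, hD, hxD, hbD⟩
    have hDs : D ∈ s (embZ b) := mem_filter.mpr ⟨hD, hbD⟩
    rw [hsb] at hDs
    rcases Finset.mem_insert.mp hDs with rfl | hDs
    · left
      rcases (hiff1 _ (hmemP x hxV)).mp hxD with h | h
      · exact embZ_inj h
      · exact absurd (h ▸ hx1) hb11
    · right
      rw [Finset.mem_singleton] at hDs
      subst hDs
      rcases (hiff2 _ (hmemP x hxV)).mp hxD with h | h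
      · exact embZ_inj h
      · exact absurd (h ▸ hx1) hb21
  -- a strict order to break symmetry
  set ord : ℤ × ℤ → ℤ × ℤ → Prop :=
    fun a c => a.1 < c.1 ∨ (a.1 = c.1 ∧ a.2 < c.2) with hord
  have ordtri : ∀ a c : ℤ × ℤ, a ≠ c → ord a c ∨ ord c a := by
    intro a c h
    have h' : ¬ (a.1 = c.1 ∧ a.2 = c.2) := fun ⟨h1, h2⟩ => h (Prod.ext h1 h2)
    simp only [hord]
    omega
  have ordasym : ∀ a c : ℤ × ℤ, ord a c → ¬ ord c a := by
    intro a c h1 h2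
    simp only [hord] at h1 h2
    omega
  have ordne : ∀ a c : ℤ × ℤ, ord a c → a ≠ c := by
    intro a c h1 e
    subst e
    simp only [hord] at h1
    omega
  -- the triple family
  set Q : (ℤ × ℤ) × (ℤ × ℤ) × (ℤ × ℤ) → Prop := fun t =>
    (s (embZ t.2.1)).card = 2 ∧ (s (embZ t.1)).card = 1 ∧ (s (embZ t.2.2)).card = 1 ∧
    shares t.1 t.2.1 ∧ shares t.2.2 t.2.1 ∧ ord t.1 t.2.2 with hQ
  set T : Finset ((ℤ × ℤ) × (ℤ × ℤ) × (ℤ × ℤ)) :=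
    (V ×ˢ V ×ˢ V).filter Q with hT
  have hTmem : ∀ t, t ∈ T ↔ (t.1 ∈ V ∧ t.2.1 ∈ V ∧ t.2.2 ∈ V) ∧ Q t := by
    intro t
    rw [hT, mem_filter, Finset.mem_product, Finset.mem_product]
  -- uniqueness given the middle point
  have key : ∀ t ∈ T, ∀ t' ∈ T, t.2.1 = t'.2.1 → t = t' := by
    intro t ht t' ht' hmid
    obtain ⟨⟨h1V, h2V, h3V⟩, h2, ha1, hc1, hsh1, hsh2, hordt⟩ := (hTmem t).mp ht
    obtain ⟨⟨h1V', h2V', h3V'⟩, h2', ha1', hc1', hsh1', hsh2', hordt'⟩ := (hTmem t').mp ht'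
    obtain ⟨a, c, haV, hcV, hac, ha, hc, hsa, hsc, huniq⟩ := hmidpartners t.2.1 h2V h2
    have e1 : t.1 = a ∨ t.1 = c := huniq t.1 h1V ha1 hsh1
    have e2 : t.2.2 = a ∨ t.2.2 = c := huniq t.2.2 h3V hc1 hsh2
    have e1' : t'.1 = a ∨ t'.1 = c := by
      apply huniq t'.1 h1V' ha1'
      rw [hmid]; exact hsh1'
    have e2' : t'.2.2 = a ∨ t'.2.2 = c := by
      apply huniq t'.2.2 h3V' hc1'
      rw [hmid]; exact hsh2'
    have hne : t.1 ≠ t.2.2 := ordne _ _ hordt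
    have hne' : t'.1 ≠ t'.2.2 := ordne _ _ hordt'
    have p1 : (t.1 = a ∧ t.2.2 = c) ∨ (t.1 = c ∧ t.2.2 = a) := by
      rcases e1 with h | h <;> rcases e2 with h' | h'
      · exact absurd (h.trans h'.symm) hne
      · exact Or.inl ⟨h, h'⟩
      · exact Or.inr ⟨h, h'⟩
      · exact absurd (h.trans h'.symm) hne
    have p1' : (t'.1 = a ∧ t'.2.2 = c) ∨ (t'.1 = c ∧ t'.2.2 = a) := by
      rcases e1' with h | h <;> rcases e2' with h' | h'
      · exact absurd (h.trans h'.symm) hne'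
      · exact Or.inl ⟨h, h'⟩
      · exact Or.inr ⟨h, h'⟩
      · exact absurd (h.trans h'.symm) hne'
    have hfst : t.1 = t'.1 ∧ t.2.2 = t'.2.2 := by
      rcases p1 with ⟨u1, u2⟩ | ⟨u1, u2⟩ <;> rcases p1' with ⟨w1, w2⟩ | ⟨w1, w2⟩
      · exact ⟨u1.trans w1.symm, u2.trans w2.symm⟩
      · exfalso
        rw [u1, u2] at hordt
        rw [w1, w2] at hordt'
        exact ordasym _ _ hordt hordt'
      · exfalso
        rw [u1, u2] at hordt
        rw [w1, w2] at hordt'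
        exact ordasym _ _ hordt' hordt
      · exact ⟨u1.trans w1.symm, u2.trans w2.symm⟩
    exact Prod.ext hfst.1 (Prod.ext hmid hfst.2)
  -- non-lonely points have signature size two
  have hmid2 : ∀ b ∈ V, ¬ (s (embZ b)).card = 1 → (s (embZ b)).card = 2 := by
    intro b hbV hb1
    have := hsig12 _ (hmemP b hbV)
    simp [hb1] at this
    exact this
  refine ⟨T, ?_, ?_⟩
  · -- the triples are induced paths
    intro t ht
    obtain ⟨⟨h1V, h2V, h3V⟩, h2, ha1, hc1, hsh1, hsh2, hordt⟩ := (hTmem t).mp ht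
    have hne1 : t.1 ≠ t.2.1 := by
      intro e; rw [e] at ha1; omega
    have hne2 : t.2.2 ≠ t.2.1 := by
      intro e; rw [e] at hc1; omega
    have hadj1 : GridAdj t.1 t.2.1 := shares_adj _ _ hne1 hsh1
    have hadj2 : GridAdj t.2.1 t.2.2 := gridAdj_symm (shares_adj _ _ hne2 hsh2)
    have hne3 : t.1 ≠ t.2.2 := ordne _ _ hordt
    exact ⟨h1V, h2V, h3V, hadj1, hadj2, not_adj_of_path hadj1 hadj2 hne3, hne3⟩
  · -- every vertex is in exactly one triple
    intro v hv
    have hvP := hmemP v hv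
    by_cases hcase : (s (embZ v)).card = 1
    · -- v is lonely
      obtain ⟨E, hE⟩ := Finset.card_eq_one.mp hcase
      have hEs : E ∈ s (embZ v) := hE ▸ Finset.mem_singleton_self E
      have hED : E ∈ 𝒟 := (mem_filter.mp hEs).1
      have hvE : embZ v ∈ E := (mem_filter.mp hEs).2
      obtain ⟨a0, b, ha0V, hbV, hab0, ha01, hb1, hiff⟩ := hdiskpts E hED
      have hbP := hmemP b hbV
      have hbE : embZ b ∈ E := (hiff _ hbP).mpr (Or.inr rfl)
      have hb2 : (s (embZ b)).card = 2 := hmid2 b hbV hb1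
      obtain ⟨a, c, haV, hcV, hac, ha1, hc1, hsa, hsc, huniq⟩ := hmidpartners b hbV hb2
      have hvb : shares v b := ⟨E, hED, hvE, hbE⟩
      have hvac : v = a ∨ v = c := huniq v hv hcase hvb
      -- t'.2.1 = b for any triple containing v
      have hforce : ∀ t' ∈ T, (v = t'.1 ∨ v = t'.2.1 ∨ v = t'.2.2) → t'.2.1 = b := by
        intro t' ht' hv'
        obtain ⟨⟨h1V', h2V', h3V'⟩, h2', ha1', hc1', hsh1', hsh2', hordt'⟩ := (hTmem t').mp ht'
        have hshv : shares v t'.2.1 := by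
          rcases hv' with rfl | rfl | rfl
          · exact hsh1'
          · exact absurd h2' (by omega)
          · exact hsh2'
        obtain ⟨D', hD', hvD', hmD'⟩ := hshv
        have : D' ∈ s (embZ v) := mem_filter.mpr ⟨hD', hvD'⟩
        rw [hE, Finset.mem_singleton] at this
        subst this
        exact nonlonely_unique D' hD' t'.2.1 b h2V' hbV hmD' hbE (by omega) hb1
      rcases ordtri a c hac with ho | ho
      · refine ⟨(a, b, c), ⟨(hTmem _).mpr ⟨⟨haV, hbV, hcV⟩, hb2, ha1, hc1, hsa, hsc, ho⟩, ?_⟩, ?_⟩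
        · rcases hvac with rfl | rfl
          · exact Or.inl rfl
          · exact Or.inr (Or.inr rfl)
        · rintro t' ⟨ht', hv'⟩
          exact key t' ht' (a, b, c)
            ((hTmem _).mpr ⟨⟨haV, hbV, hcV⟩, hb2, ha1, hc1, hsa, hsc, ho⟩)
            (hforce t' ht' hv')
      · refine ⟨(c, b, a), ⟨(hTmem _).mpr ⟨⟨hcV, hbV, haV⟩, hb2, hc1, ha1, hsc, hsa, ho⟩, ?_⟩, ?_⟩
        · rcases hvac with rfl | rfl
          · exact Or.inr (Or.inr rfl)
          · exact Or.inl rfl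
        · rintro t' ⟨ht', hv'⟩
          exact key t' ht' (c, b, a)
            ((hTmem _).mpr ⟨⟨hcV, hbV, haV⟩, hb2, hc1, ha1, hsc, hsa, ho⟩)
            (hforce t' ht' hv')
    · -- v is a middle point
      have hv2 : (s (embZ v)).card = 2 := hmid2 v hv hcase
      obtain ⟨a, c, haV, hcV, hac, ha1, hc1, hsa, hsc, huniq⟩ := hmidpartners v hv hv2
      have hforce : ∀ t' ∈ T, (v = t'.1 ∨ v = t'.2.1 ∨ v = t'.2.2) → t'.2.1 = v := by
        intro t' ht' hv'
        obtain ⟨⟨h1V', h2V', h3V'⟩, h2', ha1', hc1', hsh1', hsh2', hordt'⟩ := (hTmem t').mp ht'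
        rcases hv' with rfl | rfl | rfl
        · exact absurd ha1' (by omega)
        · rfl
        · exact absurd hc1' (by omega)
      rcases ordtri a c hac with ho | ho
      · refine ⟨(a, v, c), ⟨(hTmem _).mpr ⟨⟨haV, hv, hcV⟩, hv2, ha1, hc1, hsa, hsc, ho⟩,
          Or.inr (Or.inl rfl)⟩, ?_⟩
        rintro t' ⟨ht', hv'⟩
        exact key t' ht' (a, v, c)
          ((hTmem _).mpr ⟨⟨haV, hv, hcV⟩, hv2, ha1, hc1, hsa, hsc, ho⟩)
          (hforce t' ht' hv')
      · refine ⟨(c, v, a), ⟨(hTmem _).mpr ⟨⟨hcV, hv, haV⟩, hv2, hc1, ha1, hsc, hsa, ho⟩,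
          Or.inr (Or.inl rfl)⟩, ?_⟩
        rintro t' ⟨ht', hv'⟩
        exact key t' ht' (c, v, a)
          ((hTmem _).mpr ⟨⟨hcV, hv, haV⟩, hv2, hc1, ha1, hsc, hsa, ho⟩)
          (hforce t' ht' hv')

end P3aux

/-- A grid graph admits a partition into induced paths on three vertices iff its vertex
set can be identified by `2n/3` disks of radius `1/2`. -/
theorem P3_partition_iff_identification (V : Finset (ℤ × ℤ)) :
    (∃ T : Finset ((ℤ × ℤ) × (ℤ × ℤ) × (ℤ × ℤ)),
      (∀ t ∈ T, t.1 ∈ V ∧ t.2.1 ∈ V ∧ t.2.2 ∈ V ∧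
        GridAdj t.1 t.2.1 ∧ GridAdj t.2.1 t.2.2 ∧ ¬ GridAdj t.1 t.2.2 ∧ t.1 ≠ t.2.2) ∧
      (∀ v ∈ V, ∃! t, t ∈ T ∧ (v = t.1 ∨ v = t.2.1 ∨ v = t.2.2))) ↔
    (∃ 𝒟 : Finset (Set Pt),
      (∀ D ∈ 𝒟, ∃ c : Pt, D = Metric.closedBall c (1 / 2)) ∧
      Identifies 𝒟 (V.image embZ) ∧ 3 * 𝒟.card ≤ 2 * V.card) := by
  exact ⟨P3aux_fwd V, P3aux_bwd V⟩
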